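/- For every positive integer n, the number of normalized Dumont permutations of the second kind on {1,…,2n+2} equals the number of Dellac configurations of size n. -/

import Mathlib

/-- A Dellac configuration of size `n`: a set `D` of boxes `(l, j)` with
`1 ≤ l ≤ n`, `1 ≤ j ≤ 2n`, such that each column `l` contains exactly two boxes
of `D`, each row `j` contains exactly one box of `D`, and every box `(l, j) ∈ D`
satisfies `l ≤ j ≤ n + l`. -/
def IsDellac (n : ℕ) (D : Finset (ℕ × ℕ)) : Prop :=
  (∀ l, 1 ≤ l → l ≤ n → (D.filter fun p => p.1 = l).card = 2) ∧
  (∀ j, 1 ≤ j → j ≤ 2 * n → (D.filter fun p => p.2 = j).card = 1) ∧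
  (∀ p ∈ D, 1 ≤ p.1 ∧ p.1 ≤ n ∧ p.1 ≤ p.2 ∧ p.2 ≤ n + p.1)

/-- A normalized Dumont permutation of the second kind on `{1, …, 2n+2}`:
`σ(k) < k` for even `k`, `σ(k) > k` for odd `k`, and `σ⁻¹(2k) < σ⁻¹(2k+1)`
for `k = 1, …, n`.  Here `Fin (2*n+2)` encodes `{1, …, 2n+2}` via `v ↦ v + 1`. -/
def IsPD2N (n : ℕ) (σ : Equiv.Perm (Fin (2 * n + 2))) : Prop :=
  (∀ k : Fin (2 * n + 2), Even ((k : ℕ) + 1) → ((σ k : ℕ) < (k : ℕ))) ∧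
  (∀ k : Fin (2 * n + 2), Odd ((k : ℕ) + 1) → ((k : ℕ) < (σ k : ℕ))) ∧
  (∀ k : ℕ, ∀ _h1 : 1 ≤ k, ∀ h2 : k ≤ n,
    ((σ.symm ⟨2 * k - 1, by omega⟩ : Fin (2 * n + 2)) : ℕ) <
      ((σ.symm ⟨2 * k, by omega⟩ : Fin (2 * n + 2)) : ℕ))

namespace DellacAux
open Finset


def rowpos (n : ℕ) (t : Fin (2 * n)) : Fin (2 * n + 2) :=
  if h : (t : ℕ) < n then ⟨2 * (t : ℕ) + 3, by omega⟩
  else ⟨2 * ((t : ℕ) - n), by have := t.2; omega⟩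

lemma rowpos_spec (n : ℕ) (t : Fin (2 * n)) :
    ((t : ℕ) < n ∧ (rowpos n t : ℕ) = 2 * (t : ℕ) + 3) ∨
      (n ≤ (t : ℕ) ∧ (rowpos n t : ℕ) = 2 * ((t : ℕ) - n)) := by
  unfold rowpos; split_ifs with h
  · exact Or.inl ⟨h, rfl⟩
  · exact Or.inr ⟨by omega, rfl⟩

lemma rowpos_injective (n : ℕ) : Function.Injective (rowpos n) := by
  intro a b hab
  have h2 : (rowpos n a : ℕ) = (rowpos n b : ℕ) := by rw [hab]
  have ha := a.2; have hb := b.2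
  rcases rowpos_spec n a with ⟨h, e⟩ | ⟨h, e⟩ <;> rcases rowpos_spec n b with ⟨h', e'⟩ | ⟨h', e'⟩ <;>
    (apply Fin.ext; omega)

lemma rowpos_ne (n : ℕ) (t : Fin (2 * n)) :
    (rowpos n t : ℕ) ≠ 1 ∧ (rowpos n t : ℕ) ≠ 2 * n := by
  have ht := t.2
  rcases rowpos_spec n t with ⟨h, e⟩ | ⟨h, e⟩ <;> constructor <;> omega

lemma rowpos_surj (n : ℕ) (p : Fin (2 * n + 2)) (h1 : (p : ℕ) ≠ 1) (h2 : (p : ℕ) ≠ 2 * n) :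
    ∃ t, rowpos n t = p := by
  have hp := p.2
  by_cases ho : (p : ℕ) % 2 = 1
  · refine ⟨⟨((p : ℕ) - 3) / 2, by omega⟩, ?_⟩
    rcases rowpos_spec n ⟨((p : ℕ) - 3) / 2, by omega⟩ with ⟨h, e⟩ | ⟨h, e⟩ <;>
      (apply Fin.ext; simp only [Fin.val_mk] at h e ⊢; omega)
  · refine ⟨⟨n + (p : ℕ) / 2, by omega⟩, ?_⟩
    rcases rowpos_spec n ⟨n + (p : ℕ) / 2, by omega⟩ with ⟨h, e⟩ | ⟨h, e⟩ <;>
      (apply Fin.ext; simp only [Fin.val_mk] at h e ⊢; omega)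

def Mc (n : ℕ) := {c : Fin (2 * n) → Fin n //
  (∀ k : Fin n, (univ.filter fun t => c t = k).card = 2) ∧
  (∀ t, (c t : ℕ) ≤ (t : ℕ) ∧ (t : ℕ) ≤ n + (c t : ℕ))}

def fiberPos {n : ℕ} (c : Mc n) (k : Fin n) : Finset (Fin (2 * n + 2)) :=
  (univ.filter fun t => c.1 t = k).image (rowpos n)

lemma fiberPos_card {n : ℕ} (c : Mc n) (k : Fin n) : (fiberPos c k).card = 2 := by
  rw [fiberPos, card_image_of_injective _ (rowpos_injective n)]; exact c.2.1 k

lemma fiberPos_nonempty {n : ℕ} (c : Mc n) (k : Fin n) : (fiberPos c k).Nonempty :=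
  card_pos.mp (by rw [fiberPos_card]; omega)

noncomputable def posMin {n : ℕ} (c : Mc n) (k : Fin n) : Fin (2 * n + 2) :=
  (fiberPos c k).min' (fiberPos_nonempty c k)

noncomputable def posMax {n : ℕ} (c : Mc n) (k : Fin n) : Fin (2 * n + 2) :=
  (fiberPos c k).max' (fiberPos_nonempty c k)

lemma posMin_mem {n : ℕ} (c : Mc n) (k : Fin n) : posMin c k ∈ fiberPos c k := min'_mem _ _
lemma posMax_mem {n : ℕ} (c : Mc n) (k : Fin n) : posMax c k ∈ fiberPos c k := max'_mem _ _

lemma posMin_lt_posMax {n : ℕ} (c : Mc n) (k : Fin n) : posMin c k < posMax c k :=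
  min'_lt_max'_of_card _ (by rw [fiberPos_card]; omega)

lemma mem_fiberPos {n : ℕ} {c : Mc n} {k : Fin n} {p : Fin (2 * n + 2)}
    (hp : p ∈ fiberPos c k) : ∃ t, c.1 t = k ∧ rowpos n t = p := by
  simpa [fiberPos, mem_image, mem_filter] using hp

lemma fiberPos_parity {n : ℕ} {c : Mc n} {k : Fin n} {p : Fin (2 * n + 2)}
    (hp : p ∈ fiberPos c k) :
    ((p : ℕ) % 2 = 1 ∧ 2 * (k : ℕ) + 2 < (p : ℕ)) ∨
      ((p : ℕ) % 2 = 0 ∧ (p : ℕ) < 2 * (k : ℕ) + 1) := by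
  obtain ⟨t, htk, htp⟩ := mem_fiberPos hp
  have hb := c.2.2 t
  have hk : (c.1 t : ℕ) = (k : ℕ) := by rw [htk]
  have hpv : (p : ℕ) = (rowpos n t : ℕ) := by rw [htp]
  rcases rowpos_spec n t with ⟨h, e⟩ | ⟨h, e⟩
  · left; omega
  · right; omega

lemma fiberPos_val_ne {n : ℕ} {c : Mc n} {k : Fin n} {p : Fin (2 * n + 2)}
    (hp : p ∈ fiberPos c k) : (p : ℕ) ≠ 1 ∧ (p : ℕ) ≠ 2 * n := by
  obtain ⟨t, _, htp⟩ := mem_fiberPos hp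
  rw [← htp]; exact rowpos_ne n t

lemma eq_col_of_mem {n : ℕ} {c : Mc n} {k k' : Fin n} {p : Fin (2 * n + 2)}
    (h : p ∈ fiberPos c k) (h' : p ∈ fiberPos c k') : k = k' := by
  obtain ⟨t, htk, htp⟩ := mem_fiberPos h
  obtain ⟨t', h2, h3⟩ := mem_fiberPos h'
  have ht : t = t' := rowpos_injective n (htp.trans h3.symm)
  rw [← htk, ht, h2]

noncomputable def sigmaInvFun {n : ℕ} (c : Mc n) (w : Fin (2 * n + 2)) : Fin (2 * n + 2) :=
  if h0 : (w : ℕ) = 0 then ⟨1, by omega⟩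
  else if ht : (w : ℕ) = 2 * n + 1 then ⟨2 * n, by omega⟩
  else if ho : (w : ℕ) % 2 = 1 then posMin c ⟨((w : ℕ) - 1) / 2, by have := w.2; omega⟩
  else posMax c ⟨((w : ℕ) - 2) / 2, by have := w.2; omega⟩

lemma w_cases (n : ℕ) (w : Fin (2 * n + 2)) :
    (w : ℕ) = 0 ∨ (w : ℕ) = 2 * n + 1 ∨ (∃ k : Fin n, (w : ℕ) = 2 * (k : ℕ) + 1) ∨
      ∃ k : Fin n, (w : ℕ) = 2 * (k : ℕ) + 2 := by
  have hw := w.2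
  by_cases h0 : (w : ℕ) = 0
  · exact Or.inl h0
  by_cases ht : (w : ℕ) = 2 * n + 1
  · exact Or.inr (Or.inl ht)
  by_cases ho : (w : ℕ) % 2 = 1
  · exact Or.inr (Or.inr (Or.inl ⟨⟨((w : ℕ) - 1) / 2, by omega⟩,
      show (w : ℕ) = 2 * (((w : ℕ) - 1) / 2) + 1 by omega⟩))
  · exact Or.inr (Or.inr (Or.inr ⟨⟨((w : ℕ) - 2) / 2, by omega⟩,
      show (w : ℕ) = 2 * (((w : ℕ) - 2) / 2) + 2 by omega⟩))

lemma sigmaInvFun_zero {n : ℕ} (c : Mc n) (w : Fin (2 * n + 2)) (hw : (w : ℕ) = 0) :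
    sigmaInvFun c w = ⟨1, by omega⟩ := by
  unfold sigmaInvFun; rw [dif_pos hw]

lemma sigmaInvFun_last {n : ℕ} (c : Mc n) (w : Fin (2 * n + 2)) (hw : (w : ℕ) = 2 * n + 1) :
    sigmaInvFun c w = ⟨2 * n, by omega⟩ := by
  unfold sigmaInvFun; rw [dif_neg (by omega), dif_pos hw]

lemma sigmaInvFun_odd {n : ℕ} (c : Mc n) (w : Fin (2 * n + 2)) (k : Fin n)
    (hw : (w : ℕ) = 2 * (k : ℕ) + 1) : sigmaInvFun c w = posMin c k := by
  have hk := k.2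
  unfold sigmaInvFun
  rw [dif_neg (by omega), dif_neg (by omega), dif_pos (by omega)]
  congr 1
  exact Fin.ext (by simp only [Fin.val_mk]; omega)

lemma sigmaInvFun_even {n : ℕ} (c : Mc n) (w : Fin (2 * n + 2)) (k : Fin n)
    (hw : (w : ℕ) = 2 * (k : ℕ) + 2) : sigmaInvFun c w = posMax c k := by
  have hk := k.2
  unfold sigmaInvFun
  rw [dif_neg (by omega), dif_neg (by omega), dif_neg (by omega)]
  congr 1
  exact Fin.ext (by simp only [Fin.val_mk]; omega)

lemma sigmaInvFun_injective {n : ℕ} (c : Mc n) :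
    Function.Injective (sigmaInvFun c) := by
  intro w w' h
  rcases w_cases n w with h1 | h1 | ⟨k, h1⟩ | ⟨k, h1⟩ <;>
    rcases w_cases n w' with h2 | h2 | ⟨k', h2⟩ | ⟨k', h2⟩
  · exact Fin.ext (by omega)
  · rw [sigmaInvFun_zero c w h1, sigmaInvFun_last c w' h2] at h
    have := congrArg Fin.val h; simp only [Fin.val_mk] at this; omega
  · rw [sigmaInvFun_zero c w h1, sigmaInvFun_odd c w' k' h2] at h
    exact absurd (congrArg Fin.val h).symm ((fiberPos_val_ne (posMin_mem c k')).1)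
  · rw [sigmaInvFun_zero c w h1, sigmaInvFun_even c w' k' h2] at h
    exact absurd (congrArg Fin.val h).symm ((fiberPos_val_ne (posMax_mem c k')).1)
  · rw [sigmaInvFun_last c w h1, sigmaInvFun_zero c w' h2] at h
    have := congrArg Fin.val h; simp only [Fin.val_mk] at this; omega
  · exact Fin.ext (by omega)
  · rw [sigmaInvFun_last c w h1, sigmaInvFun_odd c w' k' h2] at h
    exact absurd (congrArg Fin.val h).symm ((fiberPos_val_ne (posMin_mem c k')).2)
  · rw [sigmaInvFun_last c w h1, sigmaInvFun_even c w' k' h2] at h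
    exact absurd (congrArg Fin.val h).symm ((fiberPos_val_ne (posMax_mem c k')).2)
  · rw [sigmaInvFun_odd c w k h1, sigmaInvFun_zero c w' h2] at h
    exact absurd (congrArg Fin.val h) ((fiberPos_val_ne (posMin_mem c k)).1)
  · rw [sigmaInvFun_odd c w k h1, sigmaInvFun_last c w' h2] at h
    exact absurd (congrArg Fin.val h) ((fiberPos_val_ne (posMin_mem c k)).2)
  · rw [sigmaInvFun_odd c w k h1, sigmaInvFun_odd c w' k' h2] at h
    have hk : k = k' := eq_col_of_mem (posMin_mem c k) (h ▸ posMin_mem c k')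
    have : (k : ℕ) = (k' : ℕ) := by rw [hk]
    exact Fin.ext (by omega)
  · rw [sigmaInvFun_odd c w k h1, sigmaInvFun_even c w' k' h2] at h
    have hk : k = k' := eq_col_of_mem (posMin_mem c k) (h ▸ posMax_mem c k')
    rw [hk] at h
    exact absurd h (ne_of_lt (posMin_lt_posMax c k'))
  · rw [sigmaInvFun_even c w k h1, sigmaInvFun_zero c w' h2] at h
    exact absurd (congrArg Fin.val h) ((fiberPos_val_ne (posMax_mem c k)).1)
  · rw [sigmaInvFun_even c w k h1, sigmaInvFun_last c w' h2] at h
    exact absurd (congrArg Fin.val h) ((fiberPos_val_ne (posMax_mem c k)).2)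
  · rw [sigmaInvFun_even c w k h1, sigmaInvFun_odd c w' k' h2] at h
    have hk : k = k' := eq_col_of_mem (posMax_mem c k) (h ▸ posMin_mem c k')
    rw [hk] at h
    exact absurd h.symm (ne_of_lt (posMin_lt_posMax c k'))
  · rw [sigmaInvFun_even c w k h1, sigmaInvFun_even c w' k' h2] at h
    have hk : k = k' := eq_col_of_mem (posMax_mem c k) (h ▸ posMax_mem c k')
    have : (k : ℕ) = (k' : ℕ) := by rw [hk]
    exact Fin.ext (by omega)

noncomputable def sigmaOf {n : ℕ} (c : Mc n) : Equiv.Perm (Fin (2 * n + 2)) :=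
  (Equiv.ofBijective _ (Finite.injective_iff_bijective.mp (sigmaInvFun_injective c))).symm

lemma sigmaOf_symm_apply {n : ℕ} (c : Mc n) (w : Fin (2 * n + 2)) :
    (sigmaOf c).symm w = sigmaInvFun c w := rfl

lemma sigmaOf_apply_inv {n : ℕ} (c : Mc n) (w : Fin (2 * n + 2)) :
    sigmaOf c (sigmaInvFun c w) = w := by
  rw [← sigmaOf_symm_apply c w, Equiv.apply_symm_apply]

lemma isPD2N_sigmaOf {n : ℕ} (c : Mc n) : IsPD2N n (sigmaOf c) := by
  have key : ∀ w : Fin (2 * n + 2),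
      ((sigmaInvFun c w : ℕ) % 2 = 1 → (w : ℕ) < (sigmaInvFun c w : ℕ)) ∧
      ((sigmaInvFun c w : ℕ) % 2 = 0 → (sigmaInvFun c w : ℕ) < (w : ℕ)) := by
    intro w
    rcases w_cases n w with h | h | ⟨k, h⟩ | ⟨k, h⟩
    · rw [sigmaInvFun_zero c w h]
      simp only [Fin.val_mk]
      omega
    · rw [sigmaInvFun_last c w h]
      simp only [Fin.val_mk]
      omega
    · rw [sigmaInvFun_odd c w k h]
      rcases fiberPos_parity (posMin_mem c k) with ⟨h1, h2⟩ | ⟨h1, h2⟩ <;> omega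
    · rw [sigmaInvFun_even c w k h]
      rcases fiberPos_parity (posMax_mem c k) with ⟨h1, h2⟩ | ⟨h1, h2⟩ <;> omega
  have hinv : ∀ p : Fin (2 * n + 2), sigmaInvFun c (sigmaOf c p) = p := fun p =>
    (sigmaOf_symm_apply c (sigmaOf c p)) ▸ Equiv.symm_apply_apply _ _
  refine ⟨?_, ?_, ?_⟩
  · intro p hp
    have hodd : (p : ℕ) % 2 = 1 := by
      rw [Nat.even_iff] at hp; omega
    have := (key (sigmaOf c p)).1
    rw [hinv p] at this
    exact this hodd
  · intro p hp
    have heven : (p : ℕ) % 2 = 0 := by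
      rw [Nat.odd_iff] at hp; omega
    have := (key (sigmaOf c p)).2
    rw [hinv p] at this
    exact this heven
  · intro m hm1 hm2
    have h1 : (sigmaOf c).symm ⟨2 * m - 1, by omega⟩ = posMin c ⟨m - 1, by omega⟩ := by
      rw [sigmaOf_symm_apply]
      exact sigmaInvFun_odd c _ ⟨m - 1, by omega⟩ (by simp only [Fin.val_mk]; omega)
    have h2 : (sigmaOf c).symm ⟨2 * m, by omega⟩ = posMax c ⟨m - 1, by omega⟩ := by
      rw [sigmaOf_symm_apply]
      exact sigmaInvFun_even c _ ⟨m - 1, by omega⟩ (by simp only [Fin.val_mk]; omega)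
    rw [h1, h2]
    exact posMin_lt_posMax c ⟨m - 1, by omega⟩

variable {n : ℕ}

lemma sigma_pos1 (σ : Equiv.Perm (Fin (2 * n + 2))) (hσ : IsPD2N n σ) :
    σ ⟨1, by omega⟩ = ⟨0, by omega⟩ := by
  have h := hσ.1 ⟨1, by omega⟩ (by simp only [Fin.val_mk]; exact ⟨1, rfl⟩)
  simp only [Fin.val_mk] at h
  exact Fin.ext (by simp only [Fin.val_mk]; omega)

lemma sigma_pos2n (σ : Equiv.Perm (Fin (2 * n + 2))) (hσ : IsPD2N n σ) :
    σ ⟨2 * n, by omega⟩ = ⟨2 * n + 1, by omega⟩ := by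
  have h := hσ.2.1 ⟨2 * n, by omega⟩ (by simp only [Fin.val_mk]; exact ⟨n, by ring⟩)
  simp only [Fin.val_mk] at h
  have := (σ ⟨2 * n, by omega⟩).2
  exact Fin.ext (by simp only [Fin.val_mk]; omega)

lemma sigma_rowpos_range (σ : Equiv.Perm (Fin (2 * n + 2))) (hσ : IsPD2N n σ)
    (t : Fin (2 * n)) :
    1 ≤ (σ (rowpos n t) : ℕ) ∧ (σ (rowpos n t) : ℕ) ≤ 2 * n := by
  have hr := rowpos_ne n t
  have i1 : σ (rowpos n t) ≠ ⟨0, by omega⟩ := by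
    rw [← sigma_pos1 σ hσ]
    intro h
    exact hr.1 (by rw [σ.injective h])
  have i2 : σ (rowpos n t) ≠ ⟨2 * n + 1, by omega⟩ := by
    rw [← sigma_pos2n σ hσ]
    intro h
    exact hr.2 (by rw [σ.injective h])
  have v1 : (σ (rowpos n t) : ℕ) ≠ 0 := fun h => i1 (Fin.ext h)
  have v2 : (σ (rowpos n t) : ℕ) ≠ 2 * n + 1 := fun h => i2 (Fin.ext h)
  have := (σ (rowpos n t)).2
  omega

def cOfFun (σ : Equiv.Perm (Fin (2 * n + 2))) (hσ : IsPD2N n σ) (t : Fin (2 * n)) : Fin n :=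
  ⟨((σ (rowpos n t) : ℕ) - 1) / 2, by have := sigma_rowpos_range σ hσ t; omega⟩

lemma cOf_constraint (σ : Equiv.Perm (Fin (2 * n + 2))) (hσ : IsPD2N n σ) (t : Fin (2 * n)) :
    (cOfFun σ hσ t : ℕ) ≤ (t : ℕ) ∧ (t : ℕ) ≤ n + (cOfFun σ hσ t : ℕ) := by
  have hr := sigma_rowpos_range σ hσ t
  have hv : (cOfFun σ hσ t : ℕ) = ((σ (rowpos n t) : ℕ) - 1) / 2 := rfl
  have ht := t.2
  rcases rowpos_spec n t with ⟨h, e⟩ | ⟨h, e⟩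
  · have heven : Even ((rowpos n t : ℕ) + 1) := by rw [e]; exact ⟨(t : ℕ) + 2, by ring⟩
    have hlt := hσ.1 (rowpos n t) heven
    omega
  · have hodd : Odd ((rowpos n t : ℕ) + 1) := by rw [e]; exact ⟨(t : ℕ) - n, by omega⟩
    have hlt := hσ.2.1 (rowpos n t) hodd
    omega

lemma cOf_fiber_image (σ : Equiv.Perm (Fin (2 * n + 2))) (hσ : IsPD2N n σ) (k : Fin n) :
    (univ.filter fun t => cOfFun σ hσ t = k).image (rowpos n) =
      {σ.symm ⟨2 * (k : ℕ) + 1, by have := k.2; omega⟩,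
        σ.symm ⟨2 * (k : ℕ) + 2, by have := k.2; omega⟩} := by
  have hk := k.2
  ext p
  simp only [mem_image, mem_filter, mem_univ, true_and, mem_insert, mem_singleton]
  constructor
  · rintro ⟨t, htk, rfl⟩
    have hr := sigma_rowpos_range σ hσ t
    have hv : ((σ (rowpos n t) : ℕ) - 1) / 2 = (k : ℕ) := congrArg Fin.val htk
    have hor : (σ (rowpos n t) : ℕ) = 2 * (k : ℕ) + 1 ∨
        (σ (rowpos n t) : ℕ) = 2 * (k : ℕ) + 2 := by omega
    rcases hor with h | h
    · left
      have he : σ (rowpos n t) = ⟨2 * (k : ℕ) + 1, by omega⟩ := Fin.ext h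
      rw [← he, Equiv.symm_apply_apply]
    · right
      have he : σ (rowpos n t) = ⟨2 * (k : ℕ) + 2, by omega⟩ := Fin.ext h
      rw [← he, Equiv.symm_apply_apply]
  · have hgen : ∀ v : Fin (2 * n + 2), 1 ≤ (v : ℕ) → (v : ℕ) ≤ 2 * n →
        ((σ.symm v : ℕ) ≠ 1 ∧ (σ.symm v : ℕ) ≠ 2 * n) := by
      intro v hv1 hv2
      constructor
      · intro h
        have : σ.symm v = ⟨1, by omega⟩ := Fin.ext h
        have := congrArg σ this
        rw [Equiv.apply_symm_apply, sigma_pos1 σ hσ] at this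
        have := congrArg Fin.val this
        simp only [Fin.val_mk] at this
        omega
      · intro h
        have : σ.symm v = ⟨2 * n, by omega⟩ := Fin.ext h
        have := congrArg σ this
        rw [Equiv.apply_symm_apply, sigma_pos2n σ hσ] at this
        have := congrArg Fin.val this
        simp only [Fin.val_mk] at this
        omega
    rintro (rfl | rfl)
    · obtain ⟨hne1, hne2⟩ := hgen ⟨2 * (k : ℕ) + 1, by omega⟩ (by simp only [Fin.val_mk]; omega)
        (by simp only [Fin.val_mk]; omega)
      obtain ⟨t, ht⟩ := rowpos_surj n _ hne1 hne2
      refine ⟨t, ?_, ht⟩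
      apply Fin.ext
      show ((σ (rowpos n t) : ℕ) - 1) / 2 = (k : ℕ)
      rw [ht, Equiv.apply_symm_apply]
      simp only [Fin.val_mk]
      omega
    · obtain ⟨hne1, hne2⟩ := hgen ⟨2 * (k : ℕ) + 2, by omega⟩ (by simp only [Fin.val_mk]; omega)
        (by simp only [Fin.val_mk]; omega)
      obtain ⟨t, ht⟩ := rowpos_surj n _ hne1 hne2
      refine ⟨t, ?_, ht⟩
      apply Fin.ext
      show ((σ (rowpos n t) : ℕ) - 1) / 2 = (k : ℕ)
      rw [ht, Equiv.apply_symm_apply]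
      simp only [Fin.val_mk]
      omega

lemma cOf_fiber_card (σ : Equiv.Perm (Fin (2 * n + 2))) (hσ : IsPD2N n σ) (k : Fin n) :
    (univ.filter fun t => cOfFun σ hσ t = k).card = 2 := by
  have h := congrArg Finset.card (cOf_fiber_image σ hσ k)
  rw [card_image_of_injective _ (rowpos_injective n)] at h
  rw [h]
  rw [card_insert_of_notMem, card_singleton]
  simp only [mem_singleton]
  intro heq
  have := σ.symm.injective heq
  have := congrArg Fin.val this
  simp only [Fin.val_mk] at this
  omega

def cOf (σ : Equiv.Perm (Fin (2 * n + 2))) (hσ : IsPD2N n σ) : Mc n :=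
  ⟨cOfFun σ hσ, cOf_fiber_card σ hσ, cOf_constraint σ hσ⟩

lemma fiberPos_cOf (σ : Equiv.Perm (Fin (2 * n + 2))) (hσ : IsPD2N n σ) (k : Fin n) :
    fiberPos (cOf σ hσ) k =
      {σ.symm ⟨2 * (k : ℕ) + 1, by have := k.2; omega⟩,
        σ.symm ⟨2 * (k : ℕ) + 2, by have := k.2; omega⟩} :=
  cOf_fiber_image σ hσ k

lemma symm_lt (σ : Equiv.Perm (Fin (2 * n + 2))) (hσ : IsPD2N n σ) (k : Fin n) :
    σ.symm ⟨2 * (k : ℕ) + 1, by have := k.2; omega⟩ <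
      σ.symm ⟨2 * (k : ℕ) + 2, by have := k.2; omega⟩ := by
  have hk := k.2
  have h := hσ.2.2 ((k : ℕ) + 1) (by omega) (by omega)
  have e1 : (⟨2 * ((k : ℕ) + 1) - 1, by omega⟩ : Fin (2 * n + 2)) =
      ⟨2 * (k : ℕ) + 1, by omega⟩ := Fin.ext (by simp only [Fin.val_mk]; omega)
  have e2 : (⟨2 * ((k : ℕ) + 1), by omega⟩ : Fin (2 * n + 2)) =
      ⟨2 * (k : ℕ) + 2, by omega⟩ := Fin.ext (by simp only [Fin.val_mk]; omega)
  rw [e1, e2] at h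
  exact h

lemma sigmaInvFun_cOf_eq (σ : Equiv.Perm (Fin (2 * n + 2))) (hσ : IsPD2N n σ)
    (w : Fin (2 * n + 2)) : sigmaInvFun (cOf σ hσ) w = σ.symm w := by
  rcases w_cases n w with h | h | ⟨k, h⟩ | ⟨k, h⟩
  · have hval : (sigmaInvFun (cOf σ hσ) w : ℕ) = 1 := by
      rw [sigmaInvFun_zero _ w h]
    apply Fin.ext
    rw [hval, show w = ⟨0, by omega⟩ from Fin.ext h, ← sigma_pos1 σ hσ,
      Equiv.symm_apply_apply]
  · have hval : (sigmaInvFun (cOf σ hσ) w : ℕ) = 2 * n := by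
      rw [sigmaInvFun_last _ w h]
    apply Fin.ext
    rw [hval, show w = ⟨2 * n + 1, by omega⟩ from Fin.ext h, ← sigma_pos2n σ hσ,
      Equiv.symm_apply_apply]
  · rw [sigmaInvFun_odd _ w k h]
    have hk := k.2
    have hw : w = ⟨2 * (k : ℕ) + 1, by omega⟩ := Fin.ext h
    rw [hw]
    apply le_antisymm
    · apply min'_le
      rw [fiberPos_cOf σ hσ k]
      exact mem_insert_self _ _
    · apply le_min'
      intro y hy
      rw [fiberPos_cOf σ hσ k] at hy
      rcases mem_insert.mp hy with rfl | hy
      · exact le_refl _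
      · rw [mem_singleton.mp hy]
        exact le_of_lt (symm_lt σ hσ k)
  · rw [sigmaInvFun_even _ w k h]
    have hk := k.2
    have hw : w = ⟨2 * (k : ℕ) + 2, by omega⟩ := Fin.ext h
    rw [hw]
    apply le_antisymm
    · apply max'_le
      intro y hy
      rw [fiberPos_cOf σ hσ k] at hy
      rcases mem_insert.mp hy with rfl | hy
      · exact le_of_lt (symm_lt σ hσ k)
      · rw [mem_singleton.mp hy]
    · apply le_max'
      rw [fiberPos_cOf σ hσ k]
      exact mem_insert_of_mem (mem_singleton_self _)

lemma sigmaOf_cOf (σ : Equiv.Perm (Fin (2 * n + 2))) (hσ : IsPD2N n σ) :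
    sigmaOf (cOf σ hσ) = σ := by
  have h : (sigmaOf (cOf σ hσ)).symm = σ.symm :=
    Equiv.ext fun w => (sigmaOf_symm_apply (cOf σ hσ) w).trans (sigmaInvFun_cOf_eq σ hσ w)
  calc sigmaOf (cOf σ hσ) = ((sigmaOf (cOf σ hσ)).symm).symm := (Equiv.symm_symm _).symm
    _ = σ.symm.symm := by rw [h]
    _ = σ := Equiv.symm_symm σ

lemma fiberPos_eq_pair (c : Mc n) (k : Fin n) :
    fiberPos c k = {posMin c k, posMax c k} := by
  symm
  apply eq_of_subset_of_card_le
  · intro x hx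
    rcases mem_insert.mp hx with rfl | hx
    · exact posMin_mem c k
    · rw [mem_singleton.mp hx]; exact posMax_mem c k
  · rw [fiberPos_card, card_insert_of_notMem (by
      simp only [mem_singleton]
      exact ne_of_lt (posMin_lt_posMax c k)), card_singleton]

lemma sigmaOf_posMin (c : Mc n) (k : Fin n) :
    sigmaOf c (posMin c k) = ⟨2 * (k : ℕ) + 1, by have := k.2; omega⟩ := by
  rw [← sigmaInvFun_odd c ⟨2 * (k : ℕ) + 1, by have := k.2; omega⟩ k rfl]
  exact sigmaOf_apply_inv c _

lemma sigmaOf_posMax (c : Mc n) (k : Fin n) :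
    sigmaOf c (posMax c k) = ⟨2 * (k : ℕ) + 2, by have := k.2; omega⟩ := by
  rw [← sigmaInvFun_even c ⟨2 * (k : ℕ) + 2, by have := k.2; omega⟩ k rfl]
  exact sigmaOf_apply_inv c _

lemma cOf_sigmaOf (c : Mc n) : cOf (sigmaOf c) (isPD2N_sigmaOf c) = c := by
  apply Subtype.ext
  funext t
  apply Fin.ext
  show ((sigmaOf c (rowpos n t) : ℕ) - 1) / 2 = (c.1 t : ℕ)
  have hmem : rowpos n t ∈ fiberPos c (c.1 t) :=
    mem_image_of_mem _ (mem_filter.mpr ⟨mem_univ t, rfl⟩)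
  rw [fiberPos_eq_pair] at hmem
  rcases mem_insert.mp hmem with h | h
  · rw [h, sigmaOf_posMin]
    simp only [Fin.val_mk]
    omega
  · rw [mem_singleton.mp h, sigmaOf_posMax]
    simp only [Fin.val_mk]
    omega

noncomputable def equivPD2N (n : ℕ) : Mc n ≃ {σ : Equiv.Perm (Fin (2 * n + 2)) // IsPD2N n σ} where
  toFun c := ⟨sigmaOf c, isPD2N_sigmaOf c⟩
  invFun s := cOf s.1 s.2
  left_inv c := cOf_sigmaOf c
  right_inv s := Subtype.ext (sigmaOf_cOf s.1 s.2)

def boxmap (c : Mc n) (t : Fin (2 * n)) : ℕ × ℕ := ((c.1 t : ℕ) + 1, (t : ℕ) + 1)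

lemma boxmap_injective (c : Mc n) : Function.Injective (boxmap c) := by
  intro a b h
  have := congrArg Prod.snd h
  simp only [boxmap] at this
  exact Fin.ext (by omega)

def dellacOf (c : Mc n) : Finset (ℕ × ℕ) := univ.image (boxmap c)

lemma isDellac_dellacOf (c : Mc n) : IsDellac n (dellacOf c) := by
  refine ⟨?_, ?_, ?_⟩
  · intro l hl1 hl2
    rw [dellacOf, filter_image]
    rw [card_image_of_injective _ (boxmap_injective c)]
    have he : (univ.filter fun t => (boxmap c t).1 = l) =
        (univ.filter fun t => c.1 t = ⟨l - 1, by omega⟩) := by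
      apply filter_congr
      intro t _
      simp only [boxmap, eq_iff_iff]
      constructor
      · intro h
        exact Fin.ext (by simp only [Fin.val_mk]; omega)
      · intro h
        have := congrArg Fin.val h
        simp only [Fin.val_mk] at this
        omega
    rw [he]
    exact c.2.1 _
  · intro j hj1 hj2
    rw [dellacOf, filter_image]
    rw [card_image_of_injective _ (boxmap_injective c)]
    have he : (univ.filter fun t => (boxmap c t).2 = j) = {(⟨j - 1, by omega⟩ : Fin (2 * n))} := by
      ext t
      simp only [boxmap, mem_filter, mem_univ, true_and, mem_singleton]
      constructor
      · intro h
        exact Fin.ext (by have h' : (t : ℕ) + 1 = j := (Finset.mem_filter.mp h).2; show (t : ℕ) = j - 1; omega)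
      · intro h
        have := congrArg Fin.val h
        simp only [Fin.val_mk] at this
        have this' : (t : ℕ) = j - 1 := this; exact Finset.mem_filter.mpr ⟨Finset.mem_univ _, by omega⟩
    rw [he, card_singleton]
  · intro p hp
    obtain ⟨t, _, rfl⟩ := mem_image.mp hp
    have hb := c.2.2 t
    have hc := (c.1 t).2
    have ht := t.2
    simp only [boxmap]
    refine ⟨by omega, by omega, by omega, by omega⟩

def colSum (D : Finset (ℕ × ℕ)) (j : ℕ) : ℕ :=
  ∑ p ∈ D.filter (fun p => p.2 = j), p.1

lemma rowBox {D : Finset (ℕ × ℕ)} (hD : IsDellac n D) (j : ℕ) (h1 : 1 ≤ j) (h2 : j ≤ 2 * n) :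
    (colSum D j, j) ∈ D ∧ 1 ≤ colSum D j ∧ colSum D j ≤ n ∧ colSum D j ≤ j ∧
      j ≤ n + colSum D j ∧ ∀ p ∈ D, p.2 = j → p.1 = colSum D j := by
  obtain ⟨a, ha⟩ := Finset.card_eq_one.mp (hD.2.1 j h1 h2)
  have haD : a ∈ D ∧ a.2 = j := by
    have : a ∈ D.filter (fun p => p.2 = j) := ha ▸ mem_singleton_self a
    exact mem_filter.mp this |>.imp id fun h => h
  have hsum : colSum D j = a.1 := by rw [colSum, ha, sum_singleton]
  have hbb := hD.2.2 a haD.1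
  have hae : (colSum D j, j) = a := by
    rw [hsum, ← haD.2]
  refine ⟨hae ▸ haD.1, by omega, by omega, by omega, by omega, ?_⟩
  intro p hp hpj
  have : p ∈ D.filter (fun p => p.2 = j) := mem_filter.mpr ⟨hp, hpj⟩
  rw [ha, mem_singleton] at this
  rw [this, hsum]

def cOfDFun {D : Finset (ℕ × ℕ)} (hD : IsDellac n D) (t : Fin (2 * n)) : Fin n :=
  ⟨colSum D ((t : ℕ) + 1) - 1, by
    have ht := t.2
    have := rowBox hD ((t : ℕ) + 1) (by omega) (by omega)
    omega⟩

lemma cOfD_fiber {D : Finset (ℕ × ℕ)} (hD : IsDellac n D) (k : Fin n) :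
    D.filter (fun p => p.1 = (k : ℕ) + 1) =
      (univ.filter fun t => cOfDFun hD t = k).image
        (fun t : Fin (2 * n) => ((k : ℕ) + 1, (t : ℕ) + 1)) := by
  have hk := k.2
  ext p
  simp only [mem_filter, mem_image, mem_univ, true_and]
  constructor
  · rintro ⟨hpD, hp1⟩
    have hb := hD.2.2 p hpD
    refine ⟨⟨p.2 - 1, by omega⟩, ?_, ?_⟩
    · apply Fin.ext
      show colSum D ((p.2 - 1) + 1) - 1 = (k : ℕ)
      have he : (p.2 - 1) + 1 = p.2 := by omega
      rw [he]
      have hu := (rowBox hD p.2 (by omega) (by omega)).2.2.2.2.2 p hpD rfl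
      omega
    · simp only [Fin.val_mk]
      have : p = (p.1, p.2) := rfl
      rw [this, hp1]
      congr 1
      omega
  · rintro ⟨t, htk, rfl⟩
    have ht := t.2
    have hrb := rowBox hD ((t : ℕ) + 1) (by omega) (by omega)
    have hv : colSum D ((t : ℕ) + 1) - 1 = (k : ℕ) := congrArg Fin.val htk
    have hcs : colSum D ((t : ℕ) + 1) = (k : ℕ) + 1 := by omega
    exact ⟨by rw [← hcs]; exact hrb.1, rfl⟩

lemma cOfD_fiber_card {D : Finset (ℕ × ℕ)} (hD : IsDellac n D) (k : Fin n) :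
    (univ.filter fun t => cOfDFun hD t = k).card = 2 := by
  have hk := k.2
  have h := congrArg Finset.card (cOfD_fiber hD k)
  rw [hD.1 ((k : ℕ) + 1) (by omega) (by omega)] at h
  rw [card_image_of_injective] at h
  · exact h.symm
  · intro a b hab
    have := congrArg Prod.snd hab
    simp only at this
    exact Fin.ext (by omega)

def cOfD {D : Finset (ℕ × ℕ)} (hD : IsDellac n D) : Mc n :=
  ⟨cOfDFun hD, fun k => cOfD_fiber_card hD k, fun t => by
    have ht := t.2
    have hrb := rowBox hD ((t : ℕ) + 1) (by omega) (by omega)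
    have hv : (cOfDFun hD t : ℕ) = colSum D ((t : ℕ) + 1) - 1 := rfl
    omega⟩

lemma dellacOf_cOfD {D : Finset (ℕ × ℕ)} (hD : IsDellac n D) :
    dellacOf (cOfD hD) = D := by
  ext p
  rw [dellacOf, mem_image]
  constructor
  · rintro ⟨t, _, rfl⟩
    have ht := t.2
    have hrb := rowBox hD ((t : ℕ) + 1) (by omega) (by omega)
    have hv : (boxmap (cOfD hD) t) = (colSum D ((t : ℕ) + 1), (t : ℕ) + 1) := by
      simp only [boxmap]
      congr 1
      show (colSum D ((t : ℕ) + 1) - 1) + 1 = colSum D ((t : ℕ) + 1)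
      omega
    rw [hv]
    exact hrb.1
  · intro hp
    have hb := hD.2.2 p hp
    have hpf : p.2 - 1 < 2 * n := by omega
    refine ⟨⟨p.2 - 1, hpf⟩, mem_univ _, ?_⟩
    have he : (p.2 - 1) + 1 = p.2 := by omega
    have hrb := rowBox hD p.2 (by omega) (by omega)
    have hu := hrb.2.2.2.2.2 p hp rfl
    have hv : (cOfDFun hD ⟨p.2 - 1, hpf⟩ : ℕ) = colSum D ((p.2 - 1) + 1) - 1 := rfl
    rw [he] at hv
    refine Prod.ext ?_ ?_
    · show (cOfDFun hD ⟨p.2 - 1, hpf⟩ : ℕ) + 1 = p.1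
      omega
    · show (p.2 - 1) + 1 = p.2
      omega

lemma cOfD_dellacOf (c : Mc n) : cOfD (isDellac_dellacOf c) = c := by
  apply Subtype.ext
  funext t
  apply Fin.ext
  show colSum (dellacOf c) ((t : ℕ) + 1) - 1 = (c.1 t : ℕ)
  have ht := t.2
  have hrb := rowBox (isDellac_dellacOf c) ((t : ℕ) + 1) (by omega) (by omega)
  have hmem : boxmap c t ∈ dellacOf c := mem_image_of_mem _ (mem_univ t)
  have hu := hrb.2.2.2.2.2 (boxmap c t) hmem rfl
  simp only [boxmap] at hu
  omega

noncomputable def equivDellac (n : ℕ) : Mc n ≃ {D : Finset (ℕ × ℕ) // IsDellac n D} where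
  toFun c := ⟨dellacOf c, isDellac_dellacOf c⟩
  invFun D := cOfD D.2
  left_inv c := cOfD_dellacOf c
  right_inv D := Subtype.ext (dellacOf_cOfD D.2)

end DellacAux

/-- For every positive integer `n`, the number of normalized Dumont permutations
of the second kind on `{1, …, 2n+2}` equals the number of Dellac configurations
of size `n`. -/
theorem card_pd2n_eq_card_dellac (n : ℕ) (hn : 1 ≤ n) :
    Nat.card {σ : Equiv.Perm (Fin (2 * n + 2)) // IsPD2N n σ} =
      Nat.card {D : Finset (ℕ × ℕ) // IsDellac n D} :=
  Nat.card_congr ((DellacAux.equivPD2N n).symm.trans (DellacAux.equivDellac n))
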